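/- arXiv:2503.02492 — 3 statements merged into one kernel-verified Lean document; each statement's English description precedes it below -/
import Mathlib

section
/- Let N ≥ 1 be an integer, let −1 = ω_0 < ω_1 < … < ω_N = 1 be real numbers with ω_j = −ω_{N−j} for all j, let ω ∈ ℂ with |ω| = 1, and let a_0, …, a_N ∈ ℂ with a_0 = a_N = −ω. Define S(s) = ∑_{j=0}^{N} a_j e^{iπω_j s}. Then for all real σ₁ ≤ σ₂ there exist constants C > 0 and T > 0 such that for every s = σ + it with σ₁ ≤ σ ≤ σ₂ and |t| ≥ T one has S(s) ≠ 0, cos(πs) ≠ 0, and |1/S(s) + 1/(2ω·cos(πs))| ≤ C·e^{−π(2−ω_{N−1})|t|}. -/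
open Complex

noncomputable section

/-- for `S(s) = ∑_{j≤N} a_j e^{iπω_j s}` with `-1 = ω_0 < ⋯ < ω_N = 1`,
`ω_j = -ω_{N-j}`, `a_0 = a_N = -ω`, `|ω| = 1`, on every vertical strip one has, for
`|Im s|` large, `S(s) ≠ 0`, `cos(πs) ≠ 0` and
`|1/S(s) + 1/(2ω cos(πs))| ≤ C e^{-π(2-ω_{N-1})|Im s|}`. -/
theorem S_inverse_asymptotics (N : ℕ) (hN : 1 ≤ N) (w : ℕ → ℝ)
    (hw0 : w 0 = -1) (hwN : w N = 1)
    (hmono : ∀ j < N, w j < w (j + 1)) (hsym : ∀ j ≤ N, w j = -w (N - j))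
    (ω : ℂ) (hω : ‖ω‖ = 1) (A : ℕ → ℂ) (hA0 : A 0 = -ω) (hAN : A N = -ω)
    (σ₁ σ₂ : ℝ) (hσ : σ₁ ≤ σ₂) :
    ∃ C : ℝ, 0 < C ∧ ∃ T : ℝ, 0 < T ∧ ∀ s : ℂ, σ₁ ≤ s.re → s.re ≤ σ₂ → T ≤ |s.im| →
      (∑ j ∈ Finset.range (N + 1), A j * Complex.exp (Complex.I * Real.pi * w j * s)) ≠ 0 ∧
      Complex.cos (Real.pi * s) ≠ 0 ∧
      ‖1 / (∑ j ∈ Finset.range (N + 1), A j * Complex.exp (Complex.I * Real.pi * w j * s)) +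
          1 / (2 * ω * Complex.cos (Real.pi * s))‖ ≤
        C * Real.exp (-Real.pi * (2 - w (N - 1)) * |s.im|) := by
  have hπ : (0:ℝ) < Real.pi := Real.pi_pos
  -- monotonicity
  have hmono' : ∀ j k, j ≤ k → k ≤ N → w j ≤ w k := by
    intro j k hjk hkN
    induction k with
    | zero => have : j = 0 := by omega
              simp [this]
    | succ k ih =>
      rcases Nat.lt_or_ge j (k+1) with h | h
      · exact le_trans (ih (by omega) (by omega)) (le_of_lt (hmono k (by omega)))
      · have : j = k+1 := by omega
        simp [this]
  set ω' := w (N-1) with hω'def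
  clear_value ω'
  have hω'lt : ω' < 1 := by
    have := hmono (N-1) (by omega)
    rw [show N - 1 + 1 = N by omega, hwN] at this
    rw [hω'def]; exact this
  have hwj : ∀ j ∈ Finset.Ioo 0 N, |w j| ≤ ω' := by
    intro j hj
    rw [Finset.mem_Ioo] at hj
    have hN2 : 2 ≤ N := by omega
    have h1 : w 1 = -ω' := by
      have := hsym 1 hN; rwa [hω'def]
    have h2 : w 1 ≤ w j := hmono' 1 j (by omega) (by omega)
    have h3 : w j ≤ ω' := by rw [hω'def]; exact hmono' j (N-1) (by omega) (by omega)
    rw [abs_le]; constructor <;> linarith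
  set δ := 1 - ω' with hδdef
  clear_value δ
  have hδpos : 0 < δ := by linarith
  set C₁ := ∑ j ∈ Finset.Ioo 0 N, ‖A j‖ with hC₁def
  clear_value C₁
  have hC₁nonneg : 0 ≤ C₁ := by
    rw [hC₁def]; exact Finset.sum_nonneg fun _ _ => norm_nonneg _
  have hlog : 0 ≤ Real.log (4*(C₁+1)) := Real.log_nonneg (by linarith)
  refine ⟨8*(C₁+1), by positivity, 1 + Real.log (4*(C₁+1)) / (Real.pi*δ), by positivity, ?_⟩
  intro s _ _ hT
  set t := s.im with htdef
  have htpos : (1:ℝ) ≤ |t| := by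
    have : 0 ≤ Real.log (4*(C₁+1)) / (Real.pi*δ) := by positivity
    linarith
  -- norm of exponential terms
  have hexp : ∀ c : ℝ, ‖Complex.exp (Complex.I * (Real.pi:ℂ) * (c:ℂ) * s)‖
      = Real.exp (-(Real.pi * c * t)) := by
    intro c
    rw [Complex.norm_exp]
    congr 1
    simp [htdef]
  set a := Real.exp (Real.pi * |t|) with hadef
  clear_value a
  have ha4 : 4 ≤ a := by
    have h1 : (4:ℝ) ≤ Real.exp 3 := by nlinarith [Real.add_one_le_exp (3:ℝ)]
    have h2 : Real.exp 3 ≤ a := by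
      rw [hadef]; apply Real.exp_le_exp.2
      nlinarith [Real.pi_gt_three]
    linarith
  have hapos : (0:ℝ) < a := by rw [hadef]; exact Real.exp_pos _
  set R := ∑ j ∈ Finset.Ioo 0 N, A j * Complex.exp (Complex.I * (Real.pi:ℂ) * (w j:ℂ) * s) with hRdef
  clear_value R
  set S := ∑ j ∈ Finset.range (N+1), A j * Complex.exp (Complex.I * (Real.pi:ℂ) * (w j:ℂ) * s) with hSdef
  clear_value S
  set D := 2 * ω * Complex.cos ((Real.pi:ℂ) * s) with hDdef
  clear_value D
  -- splitting of the sum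
  have hsplit : S = A 0 * Complex.exp (Complex.I * (Real.pi:ℂ) * ((w 0 : ℝ):ℂ) * s)
      + A N * Complex.exp (Complex.I * (Real.pi:ℂ) * ((w N : ℝ):ℂ) * s) + R := by
    rw [hSdef, hRdef]
    have h : (Finset.range (N+1)) = insert 0 (insert N (Finset.Ioo 0 N)) := by
      ext j; simp only [Finset.mem_Ioo, Finset.mem_range, Finset.mem_insert]; omega
    rw [h, Finset.sum_insert (by simp; omega), Finset.sum_insert (by simp)]
    ring
  -- cosine as exponentials
  have hcos : Complex.cos ((Real.pi:ℂ) * s)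
      = (Complex.exp (Complex.I * (Real.pi:ℂ) * s) + Complex.exp (-(Complex.I * (Real.pi:ℂ) * s)))/2 := by
    have h : Complex.cos ((Real.pi:ℂ)*s)
        = (Complex.exp (((Real.pi:ℂ)*s)*Complex.I) + Complex.exp (-((Real.pi:ℂ)*s)*Complex.I))/2 := rfl
    rw [h, show ((Real.pi:ℂ)*s)*Complex.I = Complex.I * (Real.pi:ℂ) * s by ring,
      show -((Real.pi:ℂ)*s)*Complex.I = -(Complex.I * (Real.pi:ℂ) * s) by ring]
  have hkey : S = -D + R := by
    rw [hsplit, hDdef, hcos, hA0, hAN, hw0, hwN]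
    rw [show Complex.I * (Real.pi:ℂ) * (((-1:ℝ)):ℂ) * s = -(Complex.I * (Real.pi:ℂ) * s) by
      push_cast; ring]
    rw [show Complex.I * (Real.pi:ℂ) * (((1:ℝ)):ℂ) * s = Complex.I * (Real.pi:ℂ) * s by
      push_cast; ring]
    ring
  -- bound on R
  have hR : ‖R‖ ≤ C₁ * Real.exp (Real.pi * ω' * |t|) := by
    rw [hRdef, hC₁def]
    calc ‖∑ j ∈ Finset.Ioo 0 N, A j * Complex.exp (Complex.I * (Real.pi:ℂ) * (w j:ℂ) * s)‖ ≤ ∑ j ∈ Finset.Ioo 0 N, ‖A j * Complex.exp (Complex.I * (Real.pi:ℂ) * (w j:ℂ) * s)‖ :=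
          norm_sum_le _ _
    _ ≤ ∑ j ∈ Finset.Ioo 0 N, ‖A j‖ * Real.exp (Real.pi * ω' * |t|) := by
        apply Finset.sum_le_sum
        intro j hj
        rw [norm_mul, hexp (w j)]
        apply mul_le_mul_of_nonneg_left _ (norm_nonneg _)
        apply Real.exp_le_exp.2
        have h1 : -(w j * t) ≤ |w j| * |t| := by
          rw [← abs_mul]; exact neg_le_abs _
        have h3 : -(w j * t) ≤ ω' * |t| :=
          le_trans h1 (mul_le_mul_of_nonneg_right (hwj j hj) (abs_nonneg t))
        nlinarith [h3, hπ.le]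
    _ = (∑ j ∈ Finset.Ioo 0 N, ‖A j‖) * Real.exp (Real.pi * ω' * |t|) := by rw [← Finset.sum_mul]
  -- lower bound for cos
  have hEF : a - Real.exp (-(Real.pi*|t|)) ≤
      ‖Complex.exp (Complex.I * (Real.pi:ℂ) * s) + Complex.exp (-(Complex.I * (Real.pi:ℂ) * s))‖ := by
    set E := Complex.exp (Complex.I * (Real.pi:ℂ) * s) with hEdef
    set F := Complex.exp (-(Complex.I * (Real.pi:ℂ) * s)) with hFdef
    have hE : ‖E‖ = Real.exp (-(Real.pi*t)) := by
      rw [hEdef, show Complex.I * (Real.pi:ℂ) * s = Complex.I * (Real.pi:ℂ) * (((1:ℝ)):ℂ) * s by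
        push_cast; ring, hexp 1]
      norm_num
    have hF : ‖F‖ = Real.exp (Real.pi*t) := by
      rw [hFdef, show -(Complex.I * (Real.pi:ℂ) * s) = Complex.I * (Real.pi:ℂ) * (((-1:ℝ)):ℂ) * s by
        push_cast; ring, hexp (-1)]
      congr 1; ring
    have hEF1 : ‖F‖ - ‖E‖ ≤ ‖E + F‖ := by
      have h2 := norm_le_add_norm_add' E F
      linarith
    have hEF2 : ‖E‖ - ‖F‖ ≤ ‖E + F‖ := by
      have h2 := norm_le_add_norm_add E F
      linarith
    rcases le_total 0 t with h | h
    · have habs : |t| = t := abs_of_nonneg h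
      rw [hadef, habs]; rw [hE, hF] at hEF1; linarith
    · have habs : |t| = -t := abs_of_nonpos h
      rw [hadef, habs]; rw [hE, hF] at hEF2
      ring_nf at hEF2 ⊢
      linarith
  have hcoslb : a - Real.exp (-(Real.pi*|t|)) ≤ 2 * ‖Complex.cos ((Real.pi:ℂ) * s)‖ := by
    rw [hcos]
    rw [norm_div]
    simp only [Complex.norm_ofNat]
    linarith [hEF]
  -- exp(-(π|t|)) = 1/a and smallness
  have hinva : Real.exp (-(Real.pi*|t|)) ≤ a/4 := by
    have h1 : Real.exp (-(Real.pi*|t|)) ≤ 1 := by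
      rw [show (1:ℝ) = Real.exp 0 by simp]
      apply Real.exp_le_exp.2
      simp only [neg_nonpos]
      positivity
    linarith
  have hbig : 4*(C₁+1) ≤ Real.exp (Real.pi*δ*|t|) := by
    rw [← Real.exp_log (show (0:ℝ) < 4*(C₁+1) by positivity)]
    apply Real.exp_le_exp.2
    have hπδ : 0 < Real.pi * δ := mul_pos hπ hδpos
    have h1 : Real.pi*δ*(1 + Real.log (4*(C₁+1))/(Real.pi*δ)) = Real.pi*δ + Real.log (4*(C₁+1)) := by
      field_simp
    have h2 : Real.pi*δ*(1 + Real.log (4*(C₁+1))/(Real.pi*δ)) ≤ Real.pi*δ*|t| :=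
      mul_le_mul_of_nonneg_left hT (le_of_lt hπδ)
    rw [h1] at h2
    linarith
  have hsmall : C₁ * Real.exp (Real.pi*ω'*|t|) ≤ a/4 := by
    have hX : (0:ℝ) < Real.exp (Real.pi*ω'*|t|) := Real.exp_pos _
    have hXY : Real.exp (Real.pi*ω'*|t|) * Real.exp (Real.pi*δ*|t|) = a := by
      rw [hadef, ← Real.exp_add]; congr 1; rw [hδdef]; ring
    nlinarith [mul_le_mul_of_nonneg_left hbig (le_of_lt hX)]
  -- lower bound for S
  have hDlb : a/2 ≤ ‖D‖ := by
    rw [hDdef]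
    have h1 : ‖2 * ω * Complex.cos ((Real.pi:ℂ) * s)‖ = 2 * ‖Complex.cos ((Real.pi:ℂ) * s)‖ := by
      rw [norm_mul, norm_mul, hω]; norm_num
    rw [h1]; linarith
  have hSlb : a/4 ≤ ‖S‖ := by
    rw [hkey]
    have h1 : ‖-D‖ - ‖R‖ ≤ ‖-D + R‖ := by
      have h2 := norm_le_add_norm_add (-D) R
      linarith
    rw [norm_neg] at h1
    linarith [hR, hsmall, hDlb]
  have hSne : S ≠ 0 := by
    intro h; rw [h, norm_zero] at hSlb; linarith
  have hcosne : Complex.cos ((Real.pi:ℂ) * s) ≠ 0 := by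
    intro h
    rw [hDdef, h, mul_zero, norm_zero] at hDlb; linarith
  have hωne : ω ≠ 0 := by
    intro h; rw [h, norm_zero] at hω; norm_num at hω
  have hDne : D ≠ 0 := by
    rw [hDdef]
    exact mul_ne_zero (mul_ne_zero two_ne_zero hωne) hcosne
  refine ⟨hSne, hcosne, ?_⟩
  -- identity
  have hident : 1/S + 1/D = R/(S*D) := by
    have hnum : 1*D + S*1 = R := by rw [hkey]; ring
    rw [div_add_div _ _ hSne hDne, hnum]
  rw [hident]
  rw [norm_div, norm_mul]
  have hSD : a/4 * (a/2) ≤ ‖S‖ * ‖D‖ := by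
    apply mul_le_mul hSlb hDlb (by linarith) (norm_nonneg _)
  have hSDpos : (0:ℝ) < a/4 * (a/2) := by positivity
  have hfinal : ‖R‖ / (‖S‖ * ‖D‖) ≤ C₁ * Real.exp (Real.pi*ω'*|t|) / (a/4 * (a/2)) := by
    apply div_le_div₀ (by positivity) hR hSDpos hSD
  have hexp2 : Real.exp (Real.pi*ω'*|t|) / (a*a) = Real.exp (-Real.pi * (2 - ω') * |t|) := by
    rw [hadef, ← Real.exp_add, ← Real.exp_sub]
    congr 1; ring
  calc ‖R‖ / (‖S‖ * ‖D‖) ≤ C₁ * Real.exp (Real.pi*ω'*|t|) / (a/4 * (a/2)) := hfinal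
  _ = 8 * C₁ * (Real.exp (Real.pi*ω'*|t|) / (a*a)) := by field_simp; ring
  _ = 8 * C₁ * Real.exp (-Real.pi * (2 - ω') * |t|) := by rw [hexp2]
  _ ≤ 8*(C₁+1) * Real.exp (-Real.pi * (2 - ω') * |t|) := by
      apply mul_le_mul_of_nonneg_right (by linarith) (Real.exp_pos _).le
end
end

section
/- Let μ > 0 be real and θ ∈ (0, π), and let S_θ = { z ∈ ℂ, z ≠ 0 : −θ < arg(z) < π } (principal argument). Suppose ψ : S_θ → ℂ is holomorphic and satisfies the three-term functional equation ψ(z) = ψ(z+1) + (z+1)^{−2μ−1}·ψ(z/(z+1)) (principal branch of the complex power) for every z ∈ S_θ such that z + 1 ∈ S_θ and z/(z+1) ∈ S_θ. Then ψ has a holomorphic continuation to the cut plane { z ∈ ℂ, z ≠ 0 : |arg(z)| < π } = ℂ ∖ (−∞, 0]; that is, there exists a holomorphic function Ψ on ℂ ∖ (−∞, 0] with Ψ = ψ on S_θ. -/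
open Complex

noncomputable section

/-- The cut sector `S_θ = {z ≠ 0 : -θ < arg z < π}`. -/
def cutSector (θ : ℝ) : Set ℂ :=
  {z : ℂ | z ≠ 0 ∧ -θ < Complex.arg z ∧ Complex.arg z < Real.pi}

namespace PFC

open Real Set

/-! ### Elementary lemmas about `Complex.arg` in the lower half plane -/

lemma ne_zero_of_im_neg {w : ℂ} (hw : w.im < 0) : w ≠ 0 := by
  intro h; rw [h] at hw; simp at hw

lemma arg_of_im_neg {w : ℂ} (hw : w.im < 0) :
    arg w = Real.arctan (w.re / (-w.im)) - Real.pi / 2 := by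
  have hw0 : w ≠ 0 := ne_zero_of_im_neg hw
  have hα0 : arg w < 0 := Complex.arg_neg_iff.2 hw
  have hαπ : -Real.pi < arg w := Complex.neg_pi_lt_arg w
  have habs : (0:ℝ) < ‖w‖ := norm_pos_iff.mpr hw0
  have hkey : arg (w * I) = arg w + Real.pi / 2 := by
    have hsin := Complex.sin_arg w
    have hcos := Complex.cos_arg hw0
    have h1 : w * I = ((‖w‖ : ℝ) : ℂ) *
        (Real.cos (arg w + Real.pi / 2) + Real.sin (arg w + Real.pi / 2) * I) := by
      apply Complex.ext
      · simp only [Complex.mul_re, Complex.I_re, Complex.I_im, Complex.add_re,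
          Complex.ofReal_re, Complex.mul_im, Complex.add_im, Complex.ofReal_im,
          Real.cos_add_pi_div_two, Real.sin_add_pi_div_two]
        rw [hsin]
        field_simp
        try ring
      · simp only [Complex.mul_re, Complex.I_re, Complex.I_im, Complex.add_re,
          Complex.ofReal_re, Complex.mul_im, Complex.add_im, Complex.ofReal_im,
          Real.cos_add_pi_div_two, Real.sin_add_pi_div_two]
        rw [hcos]
        field_simp
        try ring
    have hmem : arg w + Real.pi / 2 ∈ Set.Ioc (-Real.pi) Real.pi :=
      Set.mem_Ioc.2 ⟨by linarith [Real.pi_pos], by linarith [Real.pi_pos]⟩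
    rw [h1, Complex.ofReal_cos, Complex.ofReal_sin]
    exact Complex.arg_mul_cos_add_sin_mul_I habs hmem
  have hre : 0 < (w * I).re := by simp [Complex.mul_I_re]; linarith
  have hrange : |arg (w * I)| < Real.pi / 2 :=
    Complex.abs_arg_lt_pi_div_two_iff.2 (Or.inl hre)
  have htan : Real.tan (arg (w * I)) = w.re / (-w.im) := by
    rw [Complex.tan_arg]
    simp only [Complex.mul_I_re, Complex.mul_I_im]
  have h5 := Real.arctan_tan (x := arg (w * I)) (by linarith [abs_lt.1 hrange |>.1])
      (by linarith [abs_lt.1 hrange |>.2])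
  rw [htan, hkey] at h5
  linarith

lemma arg_add_real_mono {z : ℂ} (hz : z.im < 0) {s t : ℝ} (hst : s ≤ t) :
    arg (z + s) ≤ arg (z + t) := by
  have h1 : (z + (s:ℂ)).im < 0 := by simp [hz]
  have h2 : (z + (t:ℂ)).im < 0 := by simp [hz]
  rw [arg_of_im_neg h1, arg_of_im_neg h2]
  have hY : (0:ℝ) < -z.im := by linarith
  simp only [Complex.add_re, Complex.ofReal_re, Complex.add_im, Complex.ofReal_im, add_zero]
  have h3 : (z.re + s) / (-z.im) ≤ (z.re + t) / (-z.im) :=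
    (div_le_div_iff_of_pos_right hY).mpr (by linarith)
  have := Real.arctan_strictMono.monotone h3
  linarith

lemma arg_div_of_im_neg {x y : ℂ} (hx : x.im < 0) (hy : y.im < 0) :
    arg (x / y) = arg x - arg y := by
  have hx0 : x ≠ 0 := ne_zero_of_im_neg hx
  have hy0 : y ≠ 0 := ne_zero_of_im_neg hy
  have hax : arg x < 0 := Complex.arg_neg_iff.2 hx
  have hay : arg y < 0 := Complex.arg_neg_iff.2 hy
  have haxπ : -Real.pi < arg x := Complex.neg_pi_lt_arg x
  have hayπ : -Real.pi < arg y := Complex.neg_pi_lt_arg y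
  have hinv : arg y⁻¹ = -arg y := by
    rw [Complex.arg_inv, if_neg]; intro h; rw [h] at hay; linarith [Real.pi_pos]
  rw [div_eq_mul_inv, Complex.arg_mul hx0 (inv_ne_zero hy0)
    (by rw [hinv]; exact Set.mem_Ioc.2 ⟨by linarith, by linarith [Real.pi_pos]⟩), hinv]
  ring

/-! ### The cut plane and the cut sector -/

lemma slitPlane_eq : Complex.slitPlane = {z : ℂ | z ≠ 0 ∧ |Complex.arg z| < Real.pi} := by
  ext z
  rw [Complex.mem_slitPlane_iff_arg]
  constructor
  · rintro ⟨hπ, h0⟩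
    refine ⟨h0, abs_lt.2 ⟨Complex.neg_pi_lt_arg z, lt_of_le_of_ne (Complex.arg_le_pi z) hπ⟩⟩
  · rintro ⟨h0, habs⟩
    exact ⟨(abs_lt.1 habs).2.ne, h0⟩

lemma cutSector_subset_slitPlane {θ : ℝ} : cutSector θ ⊆ Complex.slitPlane := by
  rintro z ⟨h0, _, hπ⟩
  exact Complex.mem_slitPlane_iff_arg.2 ⟨hπ.ne, h0⟩

lemma mem_cutSector_of_im_nonneg {θ : ℝ} (hθ : 0 < θ) {z : ℂ}
    (hz : z ∈ Complex.slitPlane) (him : 0 ≤ z.im) : z ∈ cutSector θ := by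
  have h0 : z ≠ 0 := Complex.slitPlane_ne_zero hz
  refine ⟨h0, lt_of_lt_of_le (by linarith) (Complex.arg_nonneg_iff.2 him), ?_⟩
  exact lt_of_le_of_ne (Complex.arg_le_pi z) (Complex.slitPlane_arg_ne_pi hz)

lemma mem_cutSector_of_im_neg {θ : ℝ} {z : ℂ} (him : z.im < 0) (h : -θ < arg z) :
    z ∈ cutSector θ := by
  have := Complex.arg_neg_iff.2 him
  exact ⟨ne_zero_of_im_neg him, h, by linarith [Real.pi_pos]⟩

lemma add_one_ne_zero {z : ℂ} (hz : z ∈ Complex.slitPlane) : z + 1 ≠ 0 := by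
  intro h
  have : z = -1 := by linear_combination h
  rw [this] at hz
  rw [Complex.mem_slitPlane_iff] at hz
  norm_num at hz

lemma im_div_add_one {z : ℂ} (hz : z + 1 ≠ 0) :
    (z / (z + 1)).im = z.im / Complex.normSq (z + 1) := by
  rw [Complex.div_im]
  have : Complex.normSq (z + 1) ≠ 0 := by
    intro h; exact hz (Complex.normSq_eq_zero.1 h)
  field_simp [Complex.add_re, Complex.add_im]
  simp only [Complex.add_re, Complex.add_im, Complex.one_re, Complex.one_im]
  ring

lemma re_div_add_one {z : ℂ} (hz : z + 1 ≠ 0) :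
    (z / (z + 1)).re = (z.re * (z.re + 1) + z.im ^ 2) / Complex.normSq (z + 1) := by
  rw [Complex.div_re]
  have : Complex.normSq (z + 1) ≠ 0 := by
    intro h; exact hz (Complex.normSq_eq_zero.1 h)
  field_simp [Complex.add_re, Complex.add_im]
  simp only [Complex.add_re, Complex.add_im, Complex.one_re, Complex.one_im]
  ring

lemma slitPlane_pos_real {z : ℂ} (hre : 0 < z.re) (him : z.im = 0) :
    z ∈ Complex.slitPlane := Complex.mem_slitPlane_iff.2 (Or.inl hre)

lemma slitPlane_add_one {z : ℂ} (hz : z ∈ Complex.slitPlane) : z + 1 ∈ Complex.slitPlane := by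
  rw [Complex.mem_slitPlane_iff] at hz ⊢
  rcases hz with h | h
  · left; simp [Complex.add_re]; linarith
  · right; simpa using h

lemma slitPlane_div_add_one {z : ℂ} (hz : z ∈ Complex.slitPlane) :
    z / (z + 1) ∈ Complex.slitPlane := by
  have h1 : z + 1 ≠ 0 := add_one_ne_zero hz
  rcases eq_or_ne z.im 0 with him | him
  · have hre : 0 < z.re := by
      rcases Complex.mem_slitPlane_iff.1 hz with h | h
      · exact h
      · exact absurd him h
    apply slitPlane_pos_real
    · rw [re_div_add_one h1]
      apply div_pos
      · nlinarith
      · have : z + 1 ≠ 0 := h1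
        have := Complex.normSq_pos.2 this
        linarith
    · rw [im_div_add_one h1, him, zero_div]
  · apply Complex.mem_slitPlane_iff.2
    right
    rw [im_div_add_one h1]
    have := Complex.normSq_pos.2 h1
    exact div_ne_zero him (by linarith)

lemma cutSector_add_one {θ : ℝ} (hθ : 0 < θ) {z : ℂ} (hz : z ∈ cutSector θ) :
    z + 1 ∈ cutSector θ := by
  have hzs : z ∈ Complex.slitPlane := cutSector_subset_slitPlane hz
  have hs : z + 1 ∈ Complex.slitPlane := slitPlane_add_one hzs
  rcases lt_or_ge z.im 0 with him | him
  · apply mem_cutSector_of_im_neg (by simpa using him)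
    have h0 : arg z ≤ arg (z + 1) := by
      have h := arg_add_real_mono him (zero_le_one (α := ℝ))
      simpa using h
    linarith [hz.2.1]
  · exact mem_cutSector_of_im_nonneg hθ hs (by simpa using him)

lemma cutSector_div_add_one {θ : ℝ} (hθ : 0 < θ) {z : ℂ} (hz : z ∈ cutSector θ) :
    z / (z + 1) ∈ cutSector θ := by
  have hzs : z ∈ Complex.slitPlane := cutSector_subset_slitPlane hz
  have h1 : z + 1 ≠ 0 := add_one_ne_zero hzs
  have hs : z / (z + 1) ∈ Complex.slitPlane := slitPlane_div_add_one hzs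
  rcases lt_or_ge z.im 0 with him | him
  · have him1 : (z + 1).im < 0 := by simpa using him
    have himq : (z / (z + 1)).im < 0 := by
      rw [im_div_add_one h1]
      exact div_neg_of_neg_of_pos him (Complex.normSq_pos.2 h1)
    apply mem_cutSector_of_im_neg himq
    rw [arg_div_of_im_neg him him1]
    have h2 : arg (z + 1) < 0 := Complex.arg_neg_iff.2 him1
    linarith [hz.2.1]
  · refine mem_cutSector_of_im_nonneg hθ hs ?_
    rw [im_div_add_one h1]
    exact div_nonneg him (Complex.normSq_nonneg _)

/-! ### The tower of domains and the extended functions -/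

def Hs (θ : ℝ) : ℕ → Set ℂ
  | 0 => cutSector θ
  | k + 1 => {z : ℂ | z ∈ Complex.slitPlane ∧ z + 1 ∈ Hs θ k ∧ z / (z + 1) ∈ Hs θ k}

def Psi (μ : ℝ) (ψ : ℂ → ℂ) : ℕ → ℂ → ℂ
  | 0 => ψ
  | k + 1 => fun z =>
      Psi μ ψ k (z + 1) + (z + 1) ^ (-(2 * (μ : ℂ)) - 1) * Psi μ ψ k (z / (z + 1))

variable {θ μ : ℝ} {ψ : ℂ → ℂ}

lemma Hs_subset_slitPlane (hθ : 0 < θ) : ∀ k, Hs θ k ⊆ Complex.slitPlane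
  | 0 => cutSector_subset_slitPlane
  | k + 1 => fun _ hz => hz.1

lemma Hs_mono_succ (hθ : 0 < θ) : ∀ k, Hs θ k ⊆ Hs θ (k + 1)
  | 0 => fun z hz => ⟨cutSector_subset_slitPlane hz, cutSector_add_one hθ hz,
      cutSector_div_add_one hθ hz⟩
  | k + 1 => fun z hz => ⟨hz.1, Hs_mono_succ hθ k hz.2.1, Hs_mono_succ hθ k hz.2.2⟩

lemma Hs_mono (hθ : 0 < θ) {j k : ℕ} (hjk : j ≤ k) : Hs θ j ⊆ Hs θ k := by
  induction k, hjk using Nat.le_induction with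
  | base => exact subset_rfl
  | succ k hjk ih => exact ih.trans (Hs_mono_succ hθ k)

lemma isOpen_cutSector (hθ : 0 < θ) : IsOpen (cutSector θ) := by
  have heq : cutSector θ = Complex.slitPlane ∩ arg ⁻¹' (Set.Ioo (-θ) Real.pi) := by
    ext z
    constructor
    · intro hz
      exact ⟨cutSector_subset_slitPlane hz, hz.2.1, hz.2.2⟩
    · rintro ⟨hs, h1, h2⟩
      exact ⟨Complex.slitPlane_ne_zero hs, h1, h2⟩
  rw [heq]
  exact ContinuousOn.isOpen_inter_preimage
    (fun z hz => (Complex.continuousAt_arg hz).continuousWithinAt)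
    Complex.isOpen_slitPlane isOpen_Ioo

lemma isOpen_Hs (hθ : 0 < θ) : ∀ k, IsOpen (Hs θ k)
  | 0 => isOpen_cutSector hθ
  | k + 1 => by
    have ih := isOpen_Hs hθ k
    have h1 : IsOpen (Complex.slitPlane ∩ (fun z : ℂ => z + 1) ⁻¹' Hs θ k) :=
      (Complex.isOpen_slitPlane).inter (ih.preimage (by continuity))
    have hcont : ContinuousOn (fun z : ℂ => z / (z + 1))
        (Complex.slitPlane ∩ (fun z : ℂ => z + 1) ⁻¹' Hs θ k) := by
      apply ContinuousOn.div continuousOn_id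
      · exact (continuous_id.add continuous_const).continuousOn
      · exact fun z hz => add_one_ne_zero hz.1
    have h2 := ContinuousOn.isOpen_inter_preimage hcont h1 ih
    convert h2 using 1
    ext z
    show z ∈ Complex.slitPlane ∧ z + 1 ∈ Hs θ k ∧ z / (z + 1) ∈ Hs θ k ↔ _
    constructor
    · rintro ⟨a, b, c⟩; exact ⟨⟨a, b⟩, c⟩
    · rintro ⟨⟨a, b⟩, c⟩; exact ⟨a, b, c⟩

lemma Psi_differentiableOn (hθ : 0 < θ) (hψ : DifferentiableOn ℂ ψ (cutSector θ)) :
    ∀ k, DifferentiableOn ℂ (Psi μ ψ k) (Hs θ k)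
  | 0 => hψ
  | k + 1 => by
    have ih := Psi_differentiableOn hθ hψ k
    intro z hz
    obtain ⟨hzs, hT, hV⟩ := hz
    have hopen := isOpen_Hs hθ (θ := θ) k
    have hd1 : DifferentiableAt ℂ (fun w : ℂ => w + 1) z :=
      differentiableAt_id.add_const 1
    have h1 : DifferentiableAt ℂ (fun w : ℂ => Psi μ ψ k (w + 1)) z :=
      (ih.differentiableAt (hopen.mem_nhds hT)).comp z hd1
    have h2 : DifferentiableAt ℂ (fun w : ℂ => (w + 1) ^ (-(2 * (μ : ℂ)) - 1)) z :=
      DifferentiableAt.cpow hd1 (differentiableAt_const _) (Hs_subset_slitPlane hθ k hT)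
    have hd3 : DifferentiableAt ℂ (fun w : ℂ => w / (w + 1)) z :=
      differentiableAt_id.div hd1 (add_one_ne_zero hzs)
    have h3 : DifferentiableAt ℂ (fun w : ℂ => Psi μ ψ k (w / (w + 1))) z :=
      (ih.differentiableAt (hopen.mem_nhds hV)).comp z hd3
    exact (h1.add (h2.mul h3)).differentiableWithinAt

lemma Psi_fe (hθ : 0 < θ)
    (hfe : ∀ z ∈ cutSector θ, z + 1 ∈ cutSector θ → z / (z + 1) ∈ cutSector θ →
      ψ z = ψ (z + 1) + (z + 1) ^ (-(2 * (μ : ℂ)) - 1) * ψ (z / (z + 1))) :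
    ∀ k, ∀ z ∈ Hs θ k, Psi μ ψ k z =
      Psi μ ψ k (z + 1) + (z + 1) ^ (-(2 * (μ : ℂ)) - 1) * Psi μ ψ k (z / (z + 1))
  | 0 => fun z hz => hfe z hz (cutSector_add_one hθ hz) (cutSector_div_add_one hθ hz)
  | k + 1 => by
    have ih := Psi_fe hθ hfe k
    intro z hz
    obtain ⟨hzs, hT, hV⟩ := hz
    have cons : ∀ w ∈ Hs θ k, Psi μ ψ (k + 1) w = Psi μ ψ k w := by
      intro w hw
      show Psi μ ψ k (w + 1) + _ * Psi μ ψ k (w / (w + 1)) = Psi μ ψ k w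
      exact (ih w hw).symm
    show Psi μ ψ k (z + 1) + _ * Psi μ ψ k (z / (z + 1)) = _
    rw [cons _ hT, cons _ hV]

lemma Psi_succ_eq (hθ : 0 < θ)
    (hfe : ∀ z ∈ cutSector θ, z + 1 ∈ cutSector θ → z / (z + 1) ∈ cutSector θ →
      ψ z = ψ (z + 1) + (z + 1) ^ (-(2 * (μ : ℂ)) - 1) * ψ (z / (z + 1)))
    (k : ℕ) {z : ℂ} (hz : z ∈ Hs θ k) : Psi μ ψ (k + 1) z = Psi μ ψ k z := by
  show Psi μ ψ k (z + 1) + _ * Psi μ ψ k (z / (z + 1)) = Psi μ ψ k z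
  exact (Psi_fe hθ hfe k z hz).symm

lemma Psi_chain (hθ : 0 < θ)
    (hfe : ∀ z ∈ cutSector θ, z + 1 ∈ cutSector θ → z / (z + 1) ∈ cutSector θ →
      ψ z = ψ (z + 1) + (z + 1) ^ (-(2 * (μ : ℂ)) - 1) * ψ (z / (z + 1)))
    {j k : ℕ} (hjk : j ≤ k) {z : ℂ} (hz : z ∈ Hs θ j) : Psi μ ψ k z = Psi μ ψ j z := by
  induction k, hjk using Nat.le_induction with
  | base => rfl
  | succ k hjk ih => rw [Psi_succ_eq hθ hfe k (Hs_mono hθ hjk hz), ih]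

/-! ### Words in the two maps and associated matrices -/

structure Mat where
  a : ℕ
  b : ℕ
  c : ℕ
  d : ℕ

def mmul (M N : Mat) : Mat :=
  ⟨M.a * N.a + M.b * N.c, M.a * N.b + M.b * N.d,
   M.c * N.a + M.d * N.c, M.c * N.b + M.d * N.d⟩

def Det (M : Mat) : Prop := M.a * M.d = M.b * M.c + 1

def mob (M : Mat) (z : ℂ) : ℂ := ((M.a : ℂ) * z + M.b) / ((M.c : ℂ) * z + M.d)

def wApp : List Bool → ℂ → ℂ
  | [], z => z
  | b :: w, z => wApp w (if b then z + 1 else z / (z + 1))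

def wMat : List Bool → Mat
  | [] => ⟨1, 0, 0, 1⟩
  | b :: w => mmul (wMat w) (if b then ⟨1, 1, 0, 1⟩ else ⟨1, 0, 1, 1⟩)

lemma Det.mmul {M N : Mat} (hM : Det M) (hN : Det N) : Det (mmul M N) := by
  obtain ⟨a, b, c, d⟩ := M
  obtain ⟨e, f, g, h⟩ := N
  unfold Det PFC.mmul at *
  simp only at *
  zify at hM hN ⊢
  linear_combination ((e : ℤ) * h - f * g) * hM + hN

lemma Det.a_pos {M : Mat} (hM : Det M) : 0 < M.a := by
  rcases Nat.eq_zero_or_pos M.a with h | h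
  · exfalso; unfold Det at hM; rw [h] at hM; simp at hM
  · exact h

lemma Det.row2 {M : Mat} (hM : Det M) : ¬(M.c = 0 ∧ M.d = 0) := by
  rintro ⟨h1, h2⟩
  unfold Det at hM
  rw [h1, h2] at hM
  simp at hM

lemma Det.bd {M : Mat} (hM : Det M) : 0 < M.b + M.d := by
  rcases Nat.eq_zero_or_pos (M.b + M.d) with h | h
  · exfalso
    have hb : M.b = 0 := by omega
    have hd : M.d = 0 := by omega
    unfold Det at hM
    rw [hb, hd] at hM
    simp at hM
  · exact h

lemma wMat_det : ∀ w : List Bool, Det (wMat w)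
  | [] => by unfold Det wMat; simp
  | b :: w => by
    have := wMat_det w
    unfold wMat
    cases b <;> exact this.mmul (by unfold Det; simp)

def msum (M : Mat) : ℕ := M.a + M.b + M.c + M.d

lemma wMat_sum : ∀ w : List Bool, w.length + 2 ≤ msum (wMat w)
  | [] => by unfold msum wMat; simp
  | b :: w => by
    have h1 := wMat_sum w
    have h2 := wMat_det w
    have h3 : 0 < (wMat w).a + (wMat w).c := by
      have := h2.a_pos; omega
    have h4 : 0 < (wMat w).b + (wMat w).d := h2.bd
    unfold wMat
    cases b
    · show w.length + 1 + 2 ≤ msum (mmul (wMat w) ⟨1, 0, 1, 1⟩)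
      unfold msum mmul at *
      simp only at *
      omega
    · show w.length + 1 + 2 ≤ msum (mmul (wMat w) ⟨1, 1, 0, 1⟩)
      unfold msum mmul at *
      simp only at *
      omega

lemma denom_ne_zero {z : ℂ} (hz : z.im < 0) {c d : ℕ} (h : ¬(c = 0 ∧ d = 0)) :
    (c : ℂ) * z + d ≠ 0 := by
  rcases Nat.eq_zero_or_pos c with hc | hc
  · have hd : d ≠ 0 := by tauto
    rw [hc]
    simp
    exact_mod_cast hd
  · intro h0
    have him : ((c : ℂ) * z + d).im = c * z.im := by
      simp [Complex.add_im, Complex.mul_im]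
    rw [h0] at him
    simp at him
    rcases him with h | h
    · omega
    · linarith

lemma im_step_true {z : ℂ} (hz : z.im < 0) : (z + 1).im < 0 := by simpa using hz

lemma im_step_false {z : ℂ} (hz : z.im < 0) : (z / (z + 1)).im < 0 := by
  have h1 : z + 1 ≠ 0 := by
    intro h
    have : (z + 1).im = 0 := by rw [h]; simp
    simp at this; linarith
  rw [im_div_add_one h1]
  exact div_neg_of_neg_of_pos hz (Complex.normSq_pos.2 h1)

lemma wApp_im_neg : ∀ (w : List Bool) {z : ℂ}, z.im < 0 → (wApp w z).im < 0
  | [], z, hz => hz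
  | b :: w, z, hz => by
    unfold wApp
    cases b
    · exact wApp_im_neg w (im_step_false hz)
    · exact wApp_im_neg w (im_step_true hz)

lemma mob_step_true {M : Mat} (hM : Det M) {z : ℂ} (hz : z.im < 0) :
    mob M (z + 1) = mob (mmul M ⟨1, 1, 0, 1⟩) z := by
  obtain ⟨a, b, c, d⟩ := M
  unfold mob mmul
  simp only
  congr 1 <;> push_cast <;> ring

lemma mob_step_false {M : Mat} (hM : Det M) {z : ℂ} (hz : z.im < 0) :
    mob M (z / (z + 1)) = mob (mmul M ⟨1, 0, 1, 1⟩) z := by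
  have h1 : z + 1 ≠ 0 := by
    intro h
    have : (z + 1).im = 0 := by rw [h]; simp
    simp at this; linarith
  have hq : (z / (z + 1)).im < 0 := im_step_false hz
  have hMV : Det (mmul M ⟨1, 0, 1, 1⟩) := hM.mmul (by unfold Det; simp)
  have hD1 : (M.c : ℂ) * (z / (z + 1)) + M.d ≠ 0 := denom_ne_zero hq hM.row2
  have hD2 : ((mmul M ⟨1, 0, 1, 1⟩).c : ℂ) * z + (mmul M ⟨1, 0, 1, 1⟩).d ≠ 0 :=
    denom_ne_zero hz hMV.row2
  obtain ⟨a, b, c, d⟩ := M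
  unfold mob mmul at *
  simp only at *
  rw [div_eq_div_iff hD1 hD2]
  field_simp
  push_cast
  ring

lemma wApp_eq_mob : ∀ (w : List Bool) {z : ℂ}, z.im < 0 → wApp w z = mob (wMat w) z
  | [], z, hz => by unfold wApp wMat mob; simp
  | b :: w, z, hz => by
    unfold wApp wMat
    cases b
    · show wApp w (z / (z + 1)) = mob (mmul (wMat w) ⟨1, 0, 1, 1⟩) z
      rw [wApp_eq_mob w (im_step_false hz), mob_step_false (wMat_det w) hz]
    · show wApp w (z + 1) = mob (mmul (wMat w) ⟨1, 1, 0, 1⟩) z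
      rw [wApp_eq_mob w (im_step_true hz), mob_step_true (wMat_det w) hz]

/-! ### Words eventually map into the sector -/

lemma arctan_sub_le {p q : ℝ} (hpq : p ≤ q) :
    Real.arctan q - Real.arctan p ≤ q - p := by
  have hmono : Monotone (fun x : ℝ => x - Real.arctan x) := by
    apply monotone_of_deriv_nonneg
    · exact differentiable_id.sub Real.differentiable_arctan
    · intro x
      have hd : deriv (fun x : ℝ => x - Real.arctan x) x = 1 - 1 / (1 + x ^ 2) := by
        rw [deriv_fun_sub differentiableAt_fun_id (Real.differentiable_arctan x),
          Real.deriv_arctan, deriv_id'']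
      rw [hd]
      have h1 : 1 / (1 + x ^ 2) ≤ 1 := by
        rw [div_le_one (by positivity)]
        nlinarith
      linarith
  have := hmono hpq
  simp only at this
  linarith

set_option maxHeartbeats 1600000 in
lemma exists_good_level (hθ0 : 0 < θ) (hθπ : θ < Real.pi) {z : ℂ} (him : z.im < 0) :
    ∃ k : ℕ, ∀ w : List Bool, w.length = k → wApp w z ∈ cutSector θ := by
  obtain ⟨Y, hYdef⟩ : ∃ Y : ℝ, Y = -z.im := ⟨_, rfl⟩
  have hY : (0:ℝ) < Y := by rw [hYdef]; linarith
  obtain ⟨B, hBdef⟩ : ∃ B : ℝ, B = max 1 (Y * Real.tan (Real.pi / 2 - θ) + 1 - z.re) :=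
    ⟨_, rfl⟩
  have hB1 : (1:ℝ) ≤ B := hBdef ▸ le_max_left _ _
  have him' : ∀ t : ℝ, (z + (t:ℂ)).im < 0 := fun t => by simpa using him
  have hargf : ∀ t : ℝ, arg (z + t) = Real.arctan ((z.re + t) / Y) - Real.pi / 2 := by
    intro t
    rw [arg_of_im_neg (him' t), hYdef]
    simp
  have hB : ∀ t : ℝ, B ≤ t → -θ < arg (z + t) := by
    intro t ht
    rw [hargf t]
    have h1 : Real.tan (Real.pi / 2 - θ) < (z.re + t) / Y := by
      rw [lt_div_iff₀ hY]
      have h2 : Y * Real.tan (Real.pi / 2 - θ) + 1 - z.re ≤ B := hBdef ▸ le_max_right _ _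
      nlinarith
    have h2 := Real.arctan_strictMono h1
    rw [Real.arctan_tan (by linarith [Real.pi_pos]) (by linarith)] at h2
    linarith
  have hL : ∀ s t : ℝ, s ≤ t → arg (z + t) - arg (z + s) ≤ (t - s) / Y := by
    intro s t hst
    rw [hargf s, hargf t]
    have h1 : (z.re + s) / Y ≤ (z.re + t) / Y :=
      (div_le_div_iff_of_pos_right hY).mpr (by linarith)
    have h2 := arctan_sub_le h1
    have h3 : (z.re + t) / Y - (z.re + s) / Y = (t - s) / Y := by ring
    linarith [h2, h3.le]
  obtain ⟨C, hCdef⟩ : ∃ C : ℝ, C = 1 / (θ * Y) := ⟨_, rfl⟩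
  have hC : (0:ℝ) < C := by rw [hCdef]; positivity
  obtain ⟨E, hEdef⟩ : ∃ E : ℝ, E = 2 * C + C * B + C ^ 2 * B + B + 4 := ⟨_, rfl⟩
  refine ⟨Nat.ceil E, ?_⟩
  intro w hw
  by_contra hbad
  have hu : (wApp w z).im < 0 := wApp_im_neg w him
  have harg : arg (wApp w z) ≤ -θ := by
    by_contra h
    push_neg at h
    exact hbad (mem_cutSector_of_im_neg hu h)
  obtain ⟨M, hMdef⟩ : ∃ M : Mat, M = wMat w := ⟨_, rfl⟩
  have hmob : wApp w z = mob M z := by rw [hMdef]; exact wApp_eq_mob w him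
  have hdet : Det M := hMdef ▸ wMat_det w
  have hsum : w.length + 2 ≤ msum M := hMdef ▸ wMat_sum w
  have hkE : E ≤ (w.length : ℝ) := by rw [hw]; exact Nat.le_ceil E
  have hsum' : (w.length : ℝ) + 2 ≤ (M.a : ℝ) + M.b + M.c + M.d := by
    have : (w.length + 2 : ℕ) ≤ M.a + M.b + M.c + M.d := hsum
    exact_mod_cast this
  rcases Nat.eq_zero_or_pos M.c with hc | hc
  · -- c = 0 : the word is a translation z + b
    have had : M.a * M.d = 1 := by
      have := hdet
      unfold Det at this
      rw [hc] at this
      simpa using this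
    have ha1 : M.a = 1 := Nat.eq_one_of_mul_eq_one_right had
    have hd1 : M.d = 1 := Nat.eq_one_of_mul_eq_one_left had
    have humob : wApp w z = z + (M.b : ℝ) := by
      rw [hmob]
      unfold mob
      rw [hc, ha1, hd1]
      push_cast
      ring
    have hblt : (M.b : ℝ) < B := by
      by_contra h
      push_neg at h
      have := hB (M.b : ℝ) h
      rw [humob] at harg
      linarith
    rw [hc, ha1, hd1] at hsum'
    push_cast at hsum'
    have hBC : (0:ℝ) < C * B := mul_pos hC (by linarith)
    have hBC2 : (0:ℝ) < C ^ 2 * B := mul_pos (by positivity) (by linarith)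
    have hBE : B + 2 ≤ E := by rw [hEdef]; nlinarith
    linarith
  · -- c ≥ 1
    have ha := hdet.a_pos
    have hapos : (0:ℝ) < (M.a : ℝ) := by exact_mod_cast ha
    have hcpos : (0:ℝ) < (M.c : ℝ) := by exact_mod_cast hc
    have hane : (M.a : ℂ) ≠ 0 := by exact_mod_cast ha.ne'
    have hcne : (M.c : ℂ) ≠ 0 := by exact_mod_cast hc.ne'
    set s : ℝ := (M.b : ℝ) / M.a with hsdef
    set t : ℝ := (M.d : ℝ) / M.c with htdef
    have hxeq : ((M.a : ℂ) * z + M.b) = ((M.a : ℝ) : ℂ) * (z + (s : ℂ)) := by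
      rw [hsdef]
      push_cast
      field_simp
    have hyeq : ((M.c : ℂ) * z + M.d) = ((M.c : ℝ) : ℂ) * (z + (t : ℂ)) := by
      rw [htdef]
      push_cast
      field_simp
    have himx : ((M.a : ℂ) * z + M.b).im < 0 := by
      rw [hxeq, Complex.im_ofReal_mul]
      exact mul_neg_of_pos_of_neg hapos (him' s)
    have himy : ((M.c : ℂ) * z + M.d).im < 0 := by
      rw [hyeq, Complex.im_ofReal_mul]
      exact mul_neg_of_pos_of_neg hcpos (him' t)
    have hargx : arg ((M.a : ℂ) * z + M.b) = arg (z + (s:ℂ)) := by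
      rw [hxeq, Complex.arg_real_mul _ hapos]
    have hargy : arg ((M.c : ℂ) * z + M.d) = arg (z + (t:ℂ)) := by
      rw [hyeq, Complex.arg_real_mul _ hcpos]
    have harg2 : arg (z + (s:ℂ)) - arg (z + (t:ℂ)) ≤ -θ := by
      have : wApp w z = ((M.a : ℂ) * z + M.b) / ((M.c : ℂ) * z + M.d) := hmob
      rw [this, arg_div_of_im_neg himx himy, hargx, hargy] at harg
      exact harg
    have hargt : arg (z + (t:ℂ)) < 0 := Complex.arg_neg_iff.2 (him' t)
    have hsB : s < B := by
      by_contra h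
      push_neg at h
      have := hB s h
      linarith
    have hdet' : (M.a : ℝ) * M.d = (M.b : ℝ) * M.c + 1 := by exact_mod_cast hdet
    have hnum : (M.d : ℝ) * M.a - (M.c : ℝ) * M.b = 1 := by linarith [hdet']
    have hts : t - s = 1 / ((M.a : ℝ) * M.c) := by
      rw [htdef, hsdef, div_sub_div _ _ (ne_of_gt hcpos) (ne_of_gt hapos), hnum, mul_comm]
    have hstle : s ≤ t := by
      have : (0:ℝ) < 1 / ((M.a : ℝ) * M.c) := by positivity
      linarith [hts]
    have hθle : θ ≤ (t - s) / Y := by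
      have := hL s t hstle
      linarith
    have ha1' : (1:ℝ) ≤ (M.a : ℝ) := by exact_mod_cast ha
    have hc1' : (1:ℝ) ≤ (M.c : ℝ) := by exact_mod_cast hc
    have hac : (M.a : ℝ) * M.c ≤ C := by
      rw [hts, div_div] at hθle
      have h1 : θ * ((M.a : ℝ) * M.c * Y) ≤ 1 :=
        (le_div_iff₀ (mul_pos (mul_pos hapos hcpos) hY)).1 hθle
      rw [hCdef, le_div_iff₀ (mul_pos hθ0 hY)]
      nlinarith
    have haC : (M.a : ℝ) ≤ C := by
      have h := mul_le_mul_of_nonneg_left hc1' hapos.le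
      rw [mul_one] at h
      linarith
    have hcC : (M.c : ℝ) ≤ C := by
      have h := mul_le_mul_of_nonneg_left ha1' hcpos.le
      rw [mul_one, mul_comm] at h
      linarith
    have hbeq : (M.b : ℝ) = s * M.a := by rw [hsdef]; field_simp
    have hB0 : (0:ℝ) < B := by linarith
    have hs0 : (0:ℝ) ≤ s := by rw [hsdef]; positivity
    have hbB : (M.b : ℝ) ≤ B * C := by
      have h1 : s * (M.a : ℝ) ≤ B * (M.a : ℝ) := mul_le_mul_of_nonneg_right hsB.le (by linarith)
      have h2 : B * (M.a : ℝ) ≤ B * C := mul_le_mul_of_nonneg_left haC (by linarith)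
      linarith [hbeq]
    have hb0 : (0:ℝ) ≤ (M.b : ℝ) := by positivity
    have hbc : (M.b : ℝ) * M.c ≤ B * C * C :=
      mul_le_mul hbB hcC (by linarith) (by positivity)
    have hdD : (M.d : ℝ) ≤ B * C * C + 1 := by
      have h1 : (M.d : ℝ) ≤ (M.a : ℝ) * M.d := by
        have h := mul_le_mul_of_nonneg_right ha1' (show (0:ℝ) ≤ (M.d : ℝ) by positivity)
        rwa [one_mul] at h
      linarith [hdet']
    have hEgt : (M.a : ℝ) + M.b + M.c + M.d < E := by
      have hE2 : C + B * C + C + (B * C * C + 1) + (B + 3) = E := by rw [hEdef]; ring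
      linarith
    linarith

lemma mem_Hs_of_words (hθ : 0 < θ) :
    ∀ k, ∀ z : ℂ, z ∈ Complex.slitPlane →
      (∀ w : List Bool, w.length = k → wApp w z ∈ cutSector θ) → z ∈ Hs θ k
  | 0, z, _, hws => hws [] rfl
  | k + 1, z, hz, hws => by
    refine ⟨hz, ?_, ?_⟩
    · exact mem_Hs_of_words hθ k (z + 1) (slitPlane_add_one hz)
        (fun w hw => hws (true :: w) (by simp [hw]))
    · exact mem_Hs_of_words hθ k (z / (z + 1)) (slitPlane_div_add_one hz)
        (fun w hw => hws (false :: w) (by simp [hw]))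

lemma exists_level (hθ0 : 0 < θ) (hθπ : θ < Real.pi) {z : ℂ}
    (hz : z ∈ Complex.slitPlane) : ∃ k, z ∈ Hs θ k := by
  rcases lt_or_ge z.im 0 with him | him
  · obtain ⟨k, hk⟩ := exists_good_level hθ0 hθπ him
    exact ⟨k, mem_Hs_of_words hθ0 k z hz hk⟩
  · exact ⟨0, mem_cutSector_of_im_nonneg hθ0 hz him⟩

end PFC

/-- a holomorphic solution on `S_θ` of the three-term functional equation
`ψ(z) = ψ(z+1) + (z+1)^{-2μ-1} ψ(z/(z+1))` extends holomorphically to the cut plane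
`{z ≠ 0 : |arg z| < π} = ℂ ∖ (-∞, 0]`. -/
theorem period_function_continuation (μ θ : ℝ) (hμ : 0 < μ) (hθ0 : 0 < θ) (hθπ : θ < Real.pi)
    (ψ : ℂ → ℂ) (hψ : DifferentiableOn ℂ ψ (cutSector θ))
    (hfe : ∀ z ∈ cutSector θ, z + 1 ∈ cutSector θ → z / (z + 1) ∈ cutSector θ →
      ψ z = ψ (z + 1) + (z + 1) ^ (-(2 * (μ : ℂ)) - 1) * ψ (z / (z + 1))) :
    ∃ Ψ : ℂ → ℂ,
      DifferentiableOn ℂ Ψ {z : ℂ | z ≠ 0 ∧ |Complex.arg z| < Real.pi} ∧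
      ∀ z ∈ cutSector θ, Ψ z = ψ z := by
  classical
  have hEx : ∀ z ∈ Complex.slitPlane, ∃ k, z ∈ PFC.Hs θ k := fun z hz =>
    PFC.exists_level hθ0 hθπ hz
  set Φ : ℂ → ℂ := fun z =>
    if h : ∃ k, z ∈ PFC.Hs θ k then PFC.Psi μ ψ (Nat.find h) z else 0 with hΦ
  have hglue : ∀ k, ∀ z ∈ PFC.Hs θ k, Φ z = PFC.Psi μ ψ k z := by
    intro k z hz
    have h : ∃ j, z ∈ PFC.Hs θ j := ⟨k, hz⟩
    simp only [hΦ, dif_pos h]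
    exact (PFC.Psi_chain hθ0 hfe (Nat.find_min' h hz) (Nat.find_spec h)).symm
  have hset : {z : ℂ | z ≠ 0 ∧ |Complex.arg z| < Real.pi} = Complex.slitPlane :=
    PFC.slitPlane_eq.symm
  refine ⟨Φ, ?_, ?_⟩
  · rw [hset]
    intro z hz
    obtain ⟨k, hk⟩ := hEx z hz
    have hopen := PFC.isOpen_Hs (θ := θ) hθ0 k
    have hdiff : DifferentiableAt ℂ (PFC.Psi μ ψ k) z :=
      (PFC.Psi_differentiableOn hθ0 hψ k).differentiableAt (hopen.mem_nhds hk)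
    have heq : Φ =ᶠ[nhds z] PFC.Psi μ ψ k :=
      Filter.eventuallyEq_of_mem (hopen.mem_nhds hk) (hglue k)
    exact (hdiff.congr_of_eventuallyEq heq).differentiableWithinAt
  · intro z hz
    exact hglue 0 z hz
end
end

section
/- Let a : ℕ → ℂ be such that ∑_{n≥1} |a(n)| e^{−2πny} < ∞ for every y > 0, and let g : ℂ → ℂ be an entire function with g(z) = ∑_{n≥1} a(n) e^{2πinz} for all z with Im(z) > 0. If there exist constants C > 0 and 0 ≤ α < 2π such that |g(z)| ≤ C·e^{α|Im(z)|} for all z ∈ ℂ, then a(n) = 0 for all n ≥ 1 and g is identically zero. -/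
open Complex

noncomputable section

private lemma epv_term_norm (a : ℂ) (n : ℕ) (z : ℂ) :
    ‖a * Complex.exp (2 * Real.pi * Complex.I * (n + 1) * z)‖
      = ‖a‖ * Real.exp (-2 * Real.pi * (n + 1) * z.im) := by
  rw [norm_mul]
  congr 1
  rw [Complex.norm_exp]
  congr 1
  have h : (2 * (Real.pi : ℂ) * Complex.I * (n + 1) * z)
      = Complex.I * (((2 * Real.pi * (n + 1) : ℝ) : ℂ) * z) := by
    push_cast; ring
  rw [h]
  simp [Complex.mul_re, Complex.mul_im]

/-- an entire function which, on the upper half-plane, is an absolutely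
convergent Fourier series `∑_{n≥1} a(n) e^{2πinz}` and which satisfies the growth bound
`|g(z)| ≤ C e^{α|Im z|}` with `0 ≤ α < 2π`, vanishes identically (and all `a(n) = 0`). -/
theorem entire_periodic_vanishes (a : ℕ → ℂ)
    (hsum : ∀ y : ℝ, 0 < y →
      Summable fun n : ℕ => ‖a (n + 1)‖ * Real.exp (-2 * Real.pi * (n + 1) * y))
    (g : ℂ → ℂ) (hg : Differentiable ℂ g)
    (hrep : ∀ z : ℂ, 0 < z.im →
      g z = ∑' n : ℕ, a (n + 1) * Complex.exp (2 * Real.pi * Complex.I * (n + 1) * z))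
    (C α : ℝ) (hC : 0 < C) (hα0 : 0 ≤ α) (hα : α < 2 * Real.pi)
    (hbd : ∀ z : ℂ, ‖g z‖ ≤ C * Real.exp (α * |z.im|)) :
    (∀ n : ℕ, 1 ≤ n → a n = 0) ∧ ∀ z : ℂ, g z = 0 := by
  have pi_pos := Real.pi_pos
  set S : ℝ → ℝ := fun y => ∑' n : ℕ, ‖a (n + 1)‖ * Real.exp (-2 * Real.pi * (n + 1) * y)
    with hSdef
  -- norm bound on the upper half-plane
  have hgb : ∀ z : ℂ, 0 < z.im → ‖g z‖ ≤ S z.im := by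
    intro z hz
    rw [hrep z hz]
    calc ‖∑' n : ℕ, a (n + 1) * Complex.exp (2 * Real.pi * Complex.I * (n + 1) * z)‖
        ≤ ∑' n : ℕ, ‖a (n + 1) * Complex.exp (2 * Real.pi * Complex.I * (n + 1) * z)‖ :=
          norm_tsum_le_tsum_norm
            ((hsum z.im hz).congr fun n => (epv_term_norm (a (n + 1)) n z).symm)
      _ = S z.im := tsum_congr fun n => epv_term_norm (a (n + 1)) n z
  -- periodicity on the upper half plane and hence everywhere
  have hper : Function.Periodic g 1 := by
    have h1 : ∀ z : ℂ, 0 < z.im → g (z + 1) = g z := by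
      intro z hz
      have hz1 : 0 < (z + 1).im := by simpa using hz
      rw [hrep z hz, hrep (z + 1) hz1]
      refine tsum_congr fun n => ?_
      congr 1
      have e1 : 2 * (Real.pi : ℂ) * Complex.I * (n + 1) * (z + 1)
          = 2 * (Real.pi : ℂ) * Complex.I * (n + 1) * z
            + (((n : ℤ) + 1 : ℤ) : ℂ) * (2 * Real.pi * Complex.I) := by
        push_cast; ring
      rw [e1, Complex.exp_add, Complex.exp_int_mul_two_pi_mul_I, mul_one]
    have hopen : IsOpen {z : ℂ | 0 < z.im} := isOpen_lt continuous_const Complex.continuous_im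
    have hf1 : AnalyticOnNhd ℂ (fun z => g (z + 1)) Set.univ :=
      ((hg.comp (differentiable_id.add_const 1)).differentiableOn).analyticOnNhd isOpen_univ
    have hf2 : AnalyticOnNhd ℂ g Set.univ := hg.differentiableOn.analyticOnNhd isOpen_univ
    have hev : (fun z => g (z + 1)) =ᶠ[nhds Complex.I] g :=
      Filter.eventuallyEq_of_mem (hopen.mem_nhds (by simp)) fun z hz => h1 z hz
    intro z
    exact AnalyticOnNhd.eqOn_of_preconnected_of_eventuallyEq hf1 hf2 isPreconnected_univ
      (Set.mem_univ Complex.I) hev (Set.mem_univ z)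
  -- decay at i∞
  have hdecay : ∀ z : ℂ, 1 ≤ z.im → ‖g z‖ ≤ Real.exp (-2 * Real.pi * (z.im - 1)) * S 1 := by
    intro z hz
    have h0 : 0 < z.im := lt_of_lt_of_le one_pos hz
    refine (hgb z h0).trans ?_
    rw [hSdef]
    simp only
    rw [← tsum_mul_left]
    refine Summable.tsum_le_tsum (fun n => ?_) (hsum z.im h0) ((hsum 1 one_pos).mul_left _)
    have hexp : Real.exp (-2 * Real.pi * (n + 1) * z.im)
        ≤ Real.exp (-2 * Real.pi * (z.im - 1)) * Real.exp (-2 * Real.pi * (n + 1) * 1) := by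
      rw [← Real.exp_add]
      apply Real.exp_le_exp.mpr
      have hn : (0:ℝ) ≤ (n : ℝ) := Nat.cast_nonneg n
      nlinarith [mul_nonneg (mul_nonneg pi_pos.le hn) (sub_nonneg.mpr hz)]
    calc ‖a (n + 1)‖ * Real.exp (-2 * Real.pi * (n + 1) * z.im)
        ≤ ‖a (n + 1)‖ * (Real.exp (-2 * Real.pi * (z.im - 1))
            * Real.exp (-2 * Real.pi * (n + 1) * 1)) :=
          mul_le_mul_of_nonneg_left hexp (norm_nonneg _)
      _ = Real.exp (-2 * Real.pi * (z.im - 1))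
            * (‖a (n + 1)‖ * Real.exp (-2 * Real.pi * (n + 1) * 1)) := by ring
  have hzero : Filter.ZeroAtFilter (Filter.comap Complex.im Filter.atTop) g := by
    unfold Filter.ZeroAtFilter
    rw [tendsto_zero_iff_norm_tendsto_zero]
    have hmem : {z : ℂ | 1 ≤ z.im} ∈ Filter.comap Complex.im Filter.atTop :=
      Filter.preimage_mem_comap (Filter.mem_atTop 1)
    refine squeeze_zero' (Filter.Eventually.of_forall fun z => norm_nonneg _)
      (Filter.eventually_iff_exists_mem.mpr ⟨_, hmem, fun z hz => hdecay z hz⟩) ?_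
    have hb : Filter.Tendsto (fun y : ℝ => -2 * Real.pi * (y - 1)) Filter.atTop Filter.atBot := by
      apply Filter.Tendsto.const_mul_atTop_of_neg (by linarith : -2 * Real.pi < 0)
      exact Filter.tendsto_atTop_add_const_right _ (-1) Filter.tendsto_id
    have hc : Filter.Tendsto Complex.im (Filter.comap Complex.im Filter.atTop) Filter.atTop :=
      Filter.tendsto_comap
    have := ((Real.tendsto_exp_atBot.comp hb).comp hc).mul_const (S 1)
    simpa using this
  have hbdI : Filter.BoundedAtFilter (Filter.comap Complex.im Filter.atTop) g :=
    hzero.boundedAtFilter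
  -- the cusp function
  set F := Function.Periodic.cuspFunction 1 g with hFdef
  have hFg : ∀ z : ℂ, F (Function.Periodic.qParam 1 z) = g z := fun z =>
    Function.Periodic.eq_cuspFunction one_ne_zero hper z
  have hF0 : F 0 = 0 := Function.Periodic.cuspFunction_zero_of_zero_at_inf one_pos hzero
  have hFdiff : Differentiable ℂ F := by
    intro q
    rcases eq_or_ne q 0 with rfl | hq
    · exact Function.Periodic.differentiableAt_cuspFunction_zero one_pos hper
        (Filter.Eventually.of_forall fun z => hg z) hbdI
    · have hq' : q = Function.Periodic.qParam 1 (Function.Periodic.invQParam 1 q) :=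
        (Function.Periodic.qParam_right_inv one_ne_zero hq).symm
      rw [hq']
      exact Function.Periodic.differentiableAt_cuspFunction one_ne_zero hper (hg _)
  -- growth of F
  set β : ℝ := α / (2 * Real.pi) with hβdef
  have hβ0 : 0 ≤ β := div_nonneg hα0 (by linarith)
  have hβ1 : β < 1 := (div_lt_one (by linarith)).mpr hα
  have hFgrow : ∀ q : ℂ, 1 ≤ ‖q‖ → ‖F q‖ ≤ C * ‖q‖ ^ β := by
    intro q hq1
    have hq : q ≠ 0 := by
      intro h; rw [h, norm_zero] at hq1; linarith
    rw [hFdef, Function.Periodic.cuspFunction_eq_of_nonzero _ _ hq]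
    refine (hbd _).trans ?_
    have him : (Function.Periodic.invQParam 1 q).im
        = -1 / (2 * Real.pi) * Real.log ‖q‖ := by
      simpa using Function.Periodic.im_invQParam 1 q
    have hlog : 0 ≤ Real.log ‖q‖ :=
      Real.log_nonneg (by exact hq1)
    have habs : |(Function.Periodic.invQParam 1 q).im|
        = Real.log ‖q‖ / (2 * Real.pi) := by
      rw [him, abs_of_nonpos (by
        apply mul_nonpos_of_nonpos_of_nonneg _ hlog
        apply div_nonpos_of_nonpos_of_nonneg <;> linarith)]
      field_simp
    rw [habs, Real.rpow_def_of_pos (lt_of_lt_of_le one_pos hq1)]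
    apply le_of_eq
    congr 1
    rw [hβdef]
    field_simp
  -- global sublinear bound for F
  obtain ⟨C₁, hC₁⟩ := (isCompact_closedBall (0 : ℂ) 1).exists_bound_of_continuousOn
    hFdiff.continuous.continuousOn
  have hC₁0 : 0 ≤ C₁ := le_trans (norm_nonneg (F 0)) (hC₁ 0 (by simp))
  have hFall : ∀ q : ℂ, ‖F q‖ ≤ C₁ + C * (1 + ‖q‖) ^ β := by
    intro q
    have hrp : (0:ℝ) ≤ C * (1 + ‖q‖) ^ β := by positivity
    rcases le_or_gt ‖q‖ 1 with h | h
    · have := hC₁ q (by simpa [Metric.mem_closedBall, dist_zero_right] using h)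
      linarith
    · have h1 := hFgrow q h.le
      have h2 : C * ‖q‖ ^ β ≤ C * (1 + ‖q‖) ^ β := by
        apply mul_le_mul_of_nonneg_left _ hC.le
        exact Real.rpow_le_rpow (norm_nonneg _) (by linarith) hβ0
      linarith
  -- Liouville-type argument : deriv F = 0
  have hderiv : ∀ c₀ : ℂ, deriv F c₀ = 0 := by
    intro c₀
    have key : ∀ R : ℝ, max 1 (1 + ‖c₀‖) ≤ R →
        ‖deriv F c₀‖ ≤ C₁ * R⁻¹ + (C * 2 ^ β) * R ^ (β - 1) := by
      intro R hR
      have hR1 : (1:ℝ) ≤ R := le_trans (le_max_left _ _) hR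
      have hR0 : 0 < R := lt_of_lt_of_le one_pos hR1
      have sphere_bd : ∀ z ∈ Metric.sphere c₀ R, ‖F z‖ ≤ C₁ + C * (2 * R) ^ β := by
        intro z hz
        refine (hFall z).trans ?_
        have hz' : ‖z - c₀‖ = R := by rwa [Metric.mem_sphere, dist_eq_norm] at hz
        have hzn : ‖z‖ ≤ ‖c₀‖ + R := by
          calc ‖z‖ = ‖z - c₀ + c₀‖ := by ring_nf
            _ ≤ ‖z - c₀‖ + ‖c₀‖ := norm_add_le _ _
            _ = ‖c₀‖ + R := by rw [hz']; ring
        have h1 : 1 + ‖z‖ ≤ 2 * R := by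
          have := le_trans (le_max_right 1 (1 + ‖c₀‖)) hR
          linarith
        have : C * (1 + ‖z‖) ^ β ≤ C * (2 * R) ^ β := by
          apply mul_le_mul_of_nonneg_left _ hC.le
          exact Real.rpow_le_rpow (by positivity) h1 hβ0
        linarith
      have hest := Complex.norm_deriv_le_of_forall_mem_sphere_norm_le hR0
        hFdiff.diffContOnCl sphere_bd
      refine hest.trans (le_of_eq ?_)
      rw [Real.mul_rpow (by norm_num : (0:ℝ) ≤ 2) hR0.le,
        Real.rpow_sub hR0, Real.rpow_one]
      field_simp
    have hψ : Filter.Tendsto (fun R : ℝ => C₁ * R⁻¹ + (C * 2 ^ β) * R ^ (β - 1))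
        Filter.atTop (nhds 0) := by
      have h1 : Filter.Tendsto (fun R : ℝ => C₁ * R⁻¹) Filter.atTop (nhds 0) := by
        simpa using tendsto_inv_atTop_zero.const_mul C₁
      have h2 : Filter.Tendsto (fun R : ℝ => (C * 2 ^ β) * R ^ (β - 1))
          Filter.atTop (nhds 0) := by
        have h3 := tendsto_rpow_neg_atTop (by linarith : (0:ℝ) < 1 - β)
        rw [show -(1 - β) = β - 1 by ring] at h3
        simpa using h3.const_mul (C * 2 ^ β)
      simpa using h1.add h2
    have hle : ‖deriv F c₀‖ ≤ 0 :=
      ge_of_tendsto hψ (Filter.eventually_atTop.mpr ⟨_, key⟩)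
    simpa using le_antisymm hle (norm_nonneg _)
  have hFzero : ∀ q : ℂ, F q = 0 := fun q => by
    rw [← hF0]; exact is_const_of_deriv_eq_zero hFdiff hderiv q 0
  have hgzero : ∀ z : ℂ, g z = 0 := fun z => by rw [← hFg z, hFzero]
  refine ⟨?_, hgzero⟩
  -- coefficients vanish
  set c : ℕ → ℂ := fun n => if n = 0 then 0 else a n with hcdef
  set p := FormalMultilinearSeries.ofScalars ℂ c with hpdef
  set r : NNReal := ⟨Real.exp (-(2 * Real.pi)), (Real.exp_pos _).le⟩ with hrdef
  have hr1 : (r : ℝ) < 1 := Real.exp_lt_one_iff.mpr (by linarith)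
  have hradius : (r : ENNReal) ≤ p.radius := by
    apply p.le_radius_of_summable_norm
    have heq : ∀ n : ℕ, ‖p n‖ * (r : ℝ) ^ n = ‖c n‖ * (r : ℝ) ^ n := fun n => by
      rw [hpdef, FormalMultilinearSeries.ofScalars_norm]
    rw [funext heq]
    apply (summable_nat_add_iff 1).mp
    refine (hsum 1 one_pos).congr fun n => ?_
    have : ((r : ℝ)) ^ (n + 1) = Real.exp (-2 * Real.pi * (n + 1) * 1) := by
      show Real.exp (-(2 * Real.pi)) ^ (n + 1) = _
      rw [← Real.exp_nat_mul]
      congr 1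
      push_cast; ring
    rw [hcdef]
    simp only [Nat.add_eq_zero, and_false, if_false, Nat.succ_ne_zero]
    rw [this]
  have hkey : HasFPowerSeriesOnBall (fun _ : ℂ => (0 : ℂ)) p 0 r := by
    refine ⟨hradius, ENNReal.coe_pos.mpr (by rw [← NNReal.coe_pos]; exact Real.exp_pos _), ?_⟩
    intro y hy
    rw [mem_emetric_ball_zero_iff, enorm_lt_coe, ← NNReal.coe_lt_coe, coe_nnnorm] at hy
    have hps : (fun n => p n fun _ => y) = fun n => c n • y ^ n := by
      funext n
      rw [hpdef, FormalMultilinearSeries.ofScalars_apply_eq]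
    rw [hps]
    show HasSum (fun n => c n • y ^ n) 0
    rcases eq_or_ne y 0 with rfl | hy0
    · convert hasSum_zero with n
      rcases n with _ | n
      · simp [hcdef]
      · simp
    · set z := Function.Periodic.invQParam 1 y with hzdef
      have hy1 : ‖y‖ < 1 := lt_trans hy hr1
      have hlogy : Real.log ‖y‖ < 0 :=
        Real.log_neg (norm_pos_iff.mpr hy0)
          (by exact hy1)
      have hzim : 0 < z.im := by
        rw [hzdef, Function.Periodic.im_invQParam]
        have hneg : -(1:ℝ) / (2 * Real.pi) < 0 := by
          apply div_neg_of_neg_of_pos <;> linarith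
        exact mul_pos_of_neg_of_neg hneg hlogy
      have hqz : Function.Periodic.qParam 1 z = y :=
        Function.Periodic.qParam_right_inv one_ne_zero hy0
      have habs : ‖y‖ = Real.exp (-2 * Real.pi * z.im) := by
        rw [← hqz, Function.Periodic.norm_qParam]
        norm_num
      have hterm : ∀ n : ℕ, a (n + 1) * Complex.exp (2 * Real.pi * Complex.I * (n + 1) * z)
          = a (n + 1) * y ^ (n + 1) := by
        intro n
        congr 1
        rw [← hqz]
        rw [Function.Periodic.qParam, ← Complex.exp_nat_mul]
        congr 1
        push_cast
        field_simp
      have hnorm : ∀ n : ℕ, ‖a (n + 1) * y ^ (n + 1)‖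
          = ‖a (n + 1)‖ * Real.exp (-2 * Real.pi * (n + 1) * z.im) := by
        intro n
        rw [norm_mul, norm_pow, habs, ← Real.exp_nat_mul]
        congr 2
        push_cast; ring
      have hsummable : Summable fun n : ℕ => a (n + 1) * y ^ (n + 1) := by
        apply Summable.of_norm
        exact (hsum z.im hzim).congr fun n => (hnorm n).symm
      have htsum : ∑' n : ℕ, a (n + 1) * y ^ (n + 1) = 0 := by
        rw [← tsum_congr hterm, ← hrep z hzim, hgzero z]
      have h1 : HasSum (fun n : ℕ => a (n + 1) * y ^ (n + 1)) 0 :=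
        htsum ▸ hsummable.hasSum
      have h2 : HasSum (fun n : ℕ => c (n + 1) • y ^ (n + 1)) 0 := by
        refine h1.congr_fun fun n => ?_
        rw [hcdef]
        simp [smul_eq_mul]
      have h3 := (hasSum_nat_add_iff (f := fun n => c n • y ^ n) 1).mp h2
      simpa [hcdef] using h3
  have hp0 : p = 0 := by
    have h0 : HasFPowerSeriesAt (0 : ℂ → ℂ) p 0 := hkey.hasFPowerSeriesAt
    exact h0.eq_zero
  intro n hn
  have hc0 : c = 0 := by
    rw [hpdef] at hp0
    exact (FormalMultilinearSeries.ofScalars_series_eq_zero ℂ).mp hp0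
  have : c n = 0 := by rw [hc0]; rfl
  rw [hcdef] at this
  simpa [Nat.one_le_iff_ne_zero.mp hn] using this
end
end
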